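/- Let ℓ and k be positive integers. Then there exist positive integers y_1 ≤ y_2 ≤ ... ≤ y_k with ∑_{i=1}^k 1/y_i = 1/ℓ and y_k = A_k, where A is the sequence defined by A_1 = ℓ and A_{i+1} = A_i(A_i + 1). (Concretely, one may take y_i = A_i + 1 for 1 ≤ i ≤ k−1 and y_k = A_k.) -/

import Mathlib

/-- Attainment half of Takenouchi's result: there is a weakly increasing `k`-term Egyptian
fraction representation of `1 / ℓ` whose largest denominator is exactly `A k`,
where `A 1 = ℓ` and `A (i+1) = A i * (A i + 1)`. -/
theorem takenouchi_attained (ℓ k : ℕ) (hℓ : 1 ≤ ℓ) (hk : 1 ≤ k)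
    (A : ℕ → ℕ) (hA1 : A 1 = ℓ)
    (hArec : ∀ i, 1 ≤ i → A (i + 1) = A i * (A i + 1)) :
    ∃ y : ℕ → ℕ,
      (∀ i ∈ Finset.Icc 1 k, 0 < y i) ∧
      (∀ i j, 1 ≤ i → i ≤ j → j ≤ k → y i ≤ y j) ∧
      (∑ i ∈ Finset.Icc 1 k, (1 : ℚ) / (y i) = 1 / ℓ) ∧
      y k = A k := by
  have hApos : ∀ i, 1 ≤ i → 0 < A i := by
    intro i hi
    induction i, hi using Nat.le_induction with
    | base => omega
    | succ n hn ih =>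
        rw [hArec n hn]
        positivity
  have hstep : ∀ i, 1 ≤ i → A i + 1 ≤ A (i + 1) := by
    intro i hi
    rw [hArec i hi]
    nlinarith [hApos i hi]
  have hmono : ∀ i j, 1 ≤ i → i ≤ j → A i ≤ A j := by
    intro i j hi hij
    induction j, hij using Nat.le_induction with
    | base => exact le_rfl
    | succ n hn ih => exact le_trans ih (le_trans (Nat.le_succ _) (hstep n (le_trans hi hn)))
  -- the key sum identity
  have hsum : ∀ m, 1 ≤ m →
      (∑ i ∈ Finset.Icc 1 (m - 1), (1 : ℚ) / (A i + 1)) + 1 / A m = 1 / ℓ := by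
    intro m hm
    induction m, hm using Nat.le_induction with
    | base => simp [hA1]
    | succ n hn ih =>
        have hn0 : (A n : ℚ) ≠ 0 := by
          exact_mod_cast (hApos n hn).ne'
        have hkey : (1 : ℚ) / (A n + 1) + 1 / A (n + 1) = 1 / A n := by
          rw [hArec n hn]
          push_cast
          field_simp
        have : n + 1 - 1 = (n - 1) + 1 := by omega
        rw [this, Finset.sum_Icc_succ_top (by omega : 1 ≤ n - 1 + 1)]
        have h1 : n - 1 + 1 = n := by omega
        rw [h1, add_assoc, hkey, ih]
  refine ⟨fun i => if i = k then A k else A i + 1, ?_, ?_, ?_, by simp⟩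
  · intro i hi
    simp only [Finset.mem_Icc] at hi
    dsimp only
    split
    · exact hApos k hk
    · omega
  · intro i j hi hij hjk
    dsimp only
    by_cases hjke : j = k
    · by_cases hik : i = k
      · simp [hik, hjke]
      · rw [if_neg hik, if_pos hjke, ← hjke]
        exact le_trans (hstep i hi) (hmono (i + 1) j (by omega) (by omega))
    · have hik : i ≠ k := by omega
      rw [if_neg hik, if_neg hjke]
      exact Nat.add_le_add_right (hmono i j hi hij) 1
  · have hk1 : k = (k - 1) + 1 := by omega
    dsimp only
    rw [hk1, Finset.sum_Icc_succ_top (by omega : 1 ≤ k - 1 + 1), ← hk1]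
    rw [Finset.sum_congr rfl (fun i hi => by
      simp only [Finset.mem_Icc] at hi
      rw [if_neg (by omega : i ≠ k)])]
    rw [if_pos rfl]
    push_cast
    exact hsum k hk
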